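/- If L is an n-bow, then the vertices of Γ(L) are exactly the cyclic triples (I, [n−1]∖I, {n}), where I ranges over the nonempty proper subsets of [n−1]; moreover, distinct such subsets I give distinct vertices. -/
import Mathlib


open Finset

/-- `I ⊆ [n]` is *short*: the sum of its lengths is less than that of its complement. -/
def ShortSet {n : ℕ} (L : Fin n → ℝ) (I : Finset (Fin n)) : Prop :=
  ∑ i ∈ I, L i < ∑ i ∈ Iᶜ, L i

/-- `I ⊆ [n]` is *long*: the sum of its lengths is greater than that of its complement. -/
def LongSet {n : ℕ} (L : Fin n → ℝ) (I : Finset (Fin n)) : Prop :=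
  ∑ i ∈ Iᶜ, L i < ∑ i ∈ I, L i

/-- The length vector `L` is *generic*. -/
def GenericVec {n : ℕ} (L : Fin n → ℝ) : Prop :=
  ∀ I : Finset (Fin n), ∑ i ∈ I, L i ≠ ∑ i ∈ Iᶜ, L i

/-- `L` satisfies the triangle inequality: every singleton is short. -/
def TriangleIneq {n : ℕ} (L : Fin n → ℝ) : Prop :=
  ∀ i : Fin n, ShortSet L {i}

/-- Ordered triples of subsets of `[n]`. -/
abbrev LTriple (n : ℕ) := Finset (Fin n) × Finset (Fin n) × Finset (Fin n)

/-- An ordered triple `(I, J, K)` representing a vertex of `Γ(L)`: three pairwise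
disjoint nonempty short sets whose union is `[n]`. -/
def IsVertex {n : ℕ} (L : Fin n → ℝ) (V : LTriple n) : Prop :=
  V.1.Nonempty ∧ V.2.1.Nonempty ∧ V.2.2.Nonempty ∧
  ShortSet L V.1 ∧ ShortSet L V.2.1 ∧ ShortSet L V.2.2 ∧
  Disjoint V.1 V.2.1 ∧ Disjoint V.1 V.2.2 ∧ Disjoint V.2.1 V.2.2 ∧
  V.1 ∪ V.2.1 ∪ V.2.2 = Finset.univ

/-- Cyclic rotation of an ordered triple. -/
def rotT {n : ℕ} (V : LTriple n) : LTriple n := (V.2.1, V.2.2, V.1)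

/-- Two ordered triples represent the same cyclically ordered partition
(`(I,J,K)`, `(J,K,I)` and `(K,I,J)` are identified). -/
def CyclEq {n : ℕ} (V W : LTriple n) : Prop :=
  W = V ∨ W = rotT V ∨ W = rotT (rotT V)

/-- The mirror image of the vertex `(I, J, K)` is the vertex `(J, I, K)`. -/
def mirrorT {n : ℕ} (V : LTriple n) : LTriple n := (V.2.1, V.1, V.2.2)

/-- The elementary move on representatives: shift a nonempty proper subset
`S ⊊ I` to the second part, provided `J ∪ S` stays short. -/
def MoveStep {n : ℕ} (L : Fin n → ℝ) (V W : LTriple n) : Prop :=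
  ∃ S : Finset (Fin n), S.Nonempty ∧ S ⊂ V.1 ∧ ShortSet L (V.2.1 ∪ S) ∧
    W = (V.1 \ S, V.2.1 ∪ S, V.2.2)

/-- Adjacency in `Γ(L)`: one of the two vertices has a representative from which an
elementary move leads to a representative of the other. -/
def GammaAdj {n : ℕ} (L : Fin n → ℝ) (V W : LTriple n) : Prop :=
  (∃ V' W' : LTriple n, CyclEq V V' ∧ MoveStep L V' W' ∧ CyclEq W W') ∨
  (∃ W' V' : LTriple n, CyclEq W W' ∧ MoveStep L W' V' ∧ CyclEq V V')

/-- There is a path of length `m` (i.e. with `m` consecutive edges) in `Γ(L)`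
from the vertex `V` to the vertex `W`. -/
def GammaPath {n : ℕ} (L : Fin n → ℝ) (m : ℕ) (V W : LTriple n) : Prop :=
  ∃ f : ℕ → LTriple n, CyclEq V (f 0) ∧ CyclEq W (f m) ∧
    (∀ i ≤ m, IsVertex L (f i)) ∧ ∀ i < m, GammaAdj L (f i) (f (i + 1))


lemma sum_mono_aux {n : ℕ} (L : Fin n → ℝ) (hpos : ∀ i, 0 < L i) {I J : Finset (Fin n)}
    (h : I ⊆ J) : ∑ i ∈ I, L i ≤ ∑ i ∈ J, L i :=
  Finset.sum_le_sum_of_subset_of_nonneg h fun i _ _ => (hpos i).le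

/-- If `L` is an `n`-bow, then the vertices of `Γ(L)` are exactly the
cyclic triples `(I, [n−1]∖I, {n})` for `I` a nonempty proper subset of `[n−1]`, and
distinct such subsets `I` give distinct vertices. -/
theorem bow_vertices_description (n : ℕ) (hn : 3 ≤ n) (L : Fin n → ℝ)
    (hpos : ∀ i, 0 < L i) (hgen : GenericVec L) (htri : TriangleIneq L)
    (hbow : ∀ i : Fin n, i ≠ ⟨n - 1, by omega⟩ → LongSet L {i, ⟨n - 1, by omega⟩}) :
    (∀ V : LTriple n, IsVertex L V ↔
      ∃ I : Finset (Fin n), I.Nonempty ∧ I ⊂ Finset.univ.erase ⟨n - 1, by omega⟩ ∧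
        CyclEq V (I, (Finset.univ.erase ⟨n - 1, by omega⟩) \ I, {⟨n - 1, by omega⟩})) ∧
    (∀ I I' : Finset (Fin n),
      I.Nonempty → I ⊂ Finset.univ.erase ⟨n - 1, by omega⟩ →
      I'.Nonempty → I' ⊂ Finset.univ.erase ⟨n - 1, by omega⟩ →
      CyclEq ((I, (Finset.univ.erase ⟨n - 1, by omega⟩) \ I,
          ({⟨n - 1, by omega⟩} : Finset (Fin n))) : LTriple n)
        ((I', (Finset.univ.erase ⟨n - 1, by omega⟩) \ I',
          ({⟨n - 1, by omega⟩} : Finset (Fin n))) : LTriple n) → I = I') := by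
  set ν : Fin n := ⟨n - 1, by omega⟩ with hν
  set E : Finset (Fin n) := Finset.univ.erase ν with hE
  have hνE : ν ∉ E := Finset.notMem_erase ν _
  have hmemE : ∀ x : Fin n, x ≠ ν → x ∈ E := fun x hx =>
    Finset.mem_erase.mpr ⟨hx, Finset.mem_univ x⟩
  -- every proper subset of E is short
  have hshortE : ∀ I : Finset (Fin n), I ⊂ E → ShortSet L I := by
    intro I hI
    obtain ⟨i, hiE, hiI⟩ := Finset.exists_of_ssubset hI
    have hiν : i ≠ ν := Finset.ne_of_mem_erase hiE
    have hνI : ν ∉ I := fun h => hνE (hI.subset h)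
    have hlong := hbow i hiν
    have h1 : I ⊆ ({i, ν} : Finset (Fin n))ᶜ := by
      intro x hx
      simp only [Finset.mem_compl, Finset.mem_insert, Finset.mem_singleton]
      rintro (rfl | rfl)
      · exact hiI hx
      · exact hνI hx
    have h2 : ({i, ν} : Finset (Fin n)) ⊆ Iᶜ := by
      intro x hx
      simp only [Finset.mem_insert, Finset.mem_singleton] at hx
      simp only [Finset.mem_compl]
      rcases hx with rfl | rfl
      · exact hiI
      · exact hνI
    have t1 := sum_mono_aux L hpos h1
    have t2 := sum_mono_aux L hpos h2
    unfold ShortSet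
    unfold LongSet at hlong
    linarith
  -- a short set containing ν must be {ν}
  have hsing : ∀ C : Finset (Fin n), ShortSet L C → ν ∈ C → C = {ν} := by
    intro C hC hνC
    by_contra hne
    obtain ⟨i, hiC, hiν⟩ : ∃ i ∈ C, i ≠ ν := by
      by_contra h
      push_neg at h
      exact hne (Finset.eq_singleton_iff_unique_mem.mpr ⟨hνC, h⟩)
    have hlong := hbow i hiν
    have h1 : ({i, ν} : Finset (Fin n)) ⊆ C := by
      intro x hx
      simp only [Finset.mem_insert, Finset.mem_singleton] at hx
      rcases hx with rfl | rfl
      · exact hiC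
      · exact hνC
    have h2 : Cᶜ ⊆ ({i, ν} : Finset (Fin n))ᶜ := Finset.compl_subset_compl.mpr h1
    have t1 := sum_mono_aux L hpos h1
    have t2 := sum_mono_aux L hpos h2
    unfold ShortSet at hC
    unfold LongSet at hlong
    linarith
  have hrot : ∀ V : LTriple n, IsVertex L V → IsVertex L (rotT V) := by
    rintro ⟨A, B, C⟩ ⟨h1, h2, h3, s1, s2, s3, d12, d13, d23, hu⟩
    refine ⟨h2, h3, h1, s2, s3, s1, d23, d12.symm, d13.symm, ?_⟩
    rw [← hu]
    ext x
    simp only [Finset.mem_union]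
    tauto
  -- main structural lemma
  have hmain : ∀ A B C : Finset (Fin n), IsVertex L (A, B, C) → ν ∈ C →
      A.Nonempty ∧ A ⊂ E ∧ ((A, E \ A, ({ν} : Finset (Fin n))) : LTriple n) = (A, B, C) := by
    intro A B C hV hνC
    obtain ⟨h1, h2, h3, s1, s2, s3, d12, d13, d23, hu⟩ := hV
    have hC : C = {ν} := hsing C s3 hνC
    subst hC
    have hνA : ν ∉ A := by
      have := Finset.disjoint_right.mp d13
      exact fun h => this (Finset.mem_singleton_self ν) h
    have hνB : ν ∉ B := by
      have := Finset.disjoint_right.mp d23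
      exact fun h => this (Finset.mem_singleton_self ν) h
    have hAB : A ∪ B = E := by
      ext x
      simp only [Finset.mem_union, hE, Finset.mem_erase, Finset.mem_univ, and_true]
      constructor
      · rintro (hx | hx)
        · exact fun h => hνA (h ▸ hx)
        · exact fun h => hνB (h ▸ hx)
      · intro hx
        have : x ∈ A ∪ B ∪ {ν} := hu ▸ Finset.mem_univ x
        simp only [Finset.mem_union, Finset.mem_singleton] at this
        tauto
    have hEA : E \ A = B := by
      rw [← hAB]
      exact Finset.union_sdiff_cancel_left d12
    refine ⟨h1, ?_, by rw [hEA]⟩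
    constructor
    · rw [← hAB]; exact Finset.subset_union_left
    · intro hsub
      obtain ⟨b, hb⟩ := h2
      have hbE : b ∈ E := by rw [← hAB]; exact Finset.mem_union_right A hb
      have : b ∈ A := hsub hbE
      exact Finset.disjoint_left.mp d12 this hb
  constructor
  · rintro ⟨A, B, C⟩
    constructor
    · intro hV
      have hνU : ν ∈ A ∪ B ∪ C := by
        have := hV.2.2.2.2.2.2.2.2.2
        rw [this]; exact Finset.mem_univ ν
      simp only [Finset.mem_union] at hνU
      rcases hνU with (hνA | hνB) | hνC
      · have hV' := hrot _ hV
        obtain ⟨hne, hss, heq⟩ := hmain B C A hV' hνA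
        exact ⟨B, hne, hss, Or.inr (Or.inl heq)⟩
      · have hV' := hrot _ (hrot _ hV)
        obtain ⟨hne, hss, heq⟩ := hmain C A B hV' hνB
        exact ⟨C, hne, hss, Or.inr (Or.inr heq)⟩
      · obtain ⟨hne, hss, heq⟩ := hmain A B C hV hνC
        exact ⟨A, hne, hss, Or.inl heq⟩
    · rintro ⟨I, hne, hss, hcyc⟩
      have hνI : ν ∉ I := fun h => hνE (hss.subset h)
      have hW : IsVertex L ((I, E \ I, ({ν} : Finset (Fin n))) : LTriple n) := by
        refine ⟨hne, ?_, Finset.singleton_nonempty ν, hshortE I hss, ?_, htri ν,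
          Finset.disjoint_sdiff, ?_, ?_, ?_⟩
        · obtain ⟨i, hiE, hiI⟩ := Finset.exists_of_ssubset hss
          exact ⟨i, Finset.mem_sdiff.mpr ⟨hiE, hiI⟩⟩
        · refine hshortE _ ⟨Finset.sdiff_subset, fun hsub => ?_⟩
          obtain ⟨i, hi⟩ := hne
          have : i ∈ E \ I := hsub (hss.subset hi)
          exact (Finset.mem_sdiff.mp this).2 hi
        · simp [Finset.disjoint_singleton_right, hνI]
        · simp [Finset.disjoint_singleton_right, hνE]
        · rw [Finset.union_sdiff_of_subset hss.subset]
          ext x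
          simp only [Finset.mem_union, hE, Finset.mem_erase, Finset.mem_univ, and_true,
            Finset.mem_singleton, iff_true]
          tauto
      rcases hcyc with heq | heq | heq
      · rw [← heq]; exact hW
      · rw [heq] at hW
        exact hrot _ (hrot _ hW)
      · rw [heq] at hW
        exact hrot _ hW
  · intro I I' hne hss hne' hss' hcyc
    have hνI' : ν ∉ I' := fun h => hνE (hss'.subset h)
    rcases hcyc with heq | heq | heq
    · exact (congrArg Prod.fst heq).symm
    · exfalso
      have h2 : E \ I' = ({ν} : Finset (Fin n)) := congrArg (fun p : LTriple n => p.2.1) heq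
      have : ν ∈ E \ I' := h2 ▸ Finset.mem_singleton_self ν
      exact hνE (Finset.mem_sdiff.mp this).1
    · exfalso
      have h1 : I' = ({ν} : Finset (Fin n)) := congrArg Prod.fst heq
      exact hνI' (h1 ▸ Finset.mem_singleton_self ν)
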